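/- Let a < b be real numbers and let X be uniformly distributed on [a,b]. Then E[(RTN(X) − X)²] = (b−a)²/12, where RTN(X) denotes the endpoint of {a,b} nearest to X, while E[(SR_{[a,b]}(X) − X)²] = (b−a)²/6 (expectation over both X and the rounding randomness). Hence stochastic rounding incurs exactly twice the mean squared error of round-to-nearest for uniform inputs. -/

import Mathlib

open MeasureTheory

/-- Let `a < b` and let `X` be uniformly distributed on `[a,b]`.
Then `E[(RTN(X) − X)²] = (b−a)²/12`, where `RTN(X)` is the endpoint of `{a,b}` nearest
to `X`, while for stochastic rounding (with its defining distribution, expectation taken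
over both `X` and the rounding randomness) `E[(SR_{[a,b]}(X) − X)²] = (b−a)²/6`;
hence stochastic rounding incurs exactly twice the MSE of round-to-nearest. -/
theorem sr_vs_rtn_uniform_mse (a b : ℝ) (hab : a < b)
    {Ω : Type*} [MeasurableSpace Ω] (ν : Measure Ω) [IsProbabilityMeasure ν]
    (SR : ℝ → Ω → ℝ) (hSRmeas : Measurable (Function.uncurry SR))
    (hSR : ∀ x ∈ Set.Icc a b,
      ν {ω | SR x ω = b} = ENNReal.ofReal ((x - a) / (b - a)) ∧
      ν {ω | SR x ω = a} = ENNReal.ofReal ((b - x) / (b - a)))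
    (RTN : ℝ → ℝ) (hRTNmeas : Measurable RTN)
    (hRTN : ∀ x ∈ Set.Icc a b, (RTN x = a ∨ RTN x = b) ∧
      |RTN x - x| ≤ |a - x| ∧ |RTN x - x| ≤ |b - x|)
    (μ : Measure ℝ) (hμ : μ = (ENNReal.ofReal (b - a))⁻¹ • volume.restrict (Set.Icc a b)) :
    ∫ x, (RTN x - x) ^ 2 ∂μ = (b - a) ^ 2 / 12 ∧
    ∫ p, (SR p.1 p.2 - p.1) ^ 2 ∂(μ.prod ν) = (b - a) ^ 2 / 6 ∧
    ∫ p, (SR p.1 p.2 - p.1) ^ 2 ∂(μ.prod ν) = 2 * ∫ x, (RTN x - x) ^ 2 ∂μ := by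
  have hc : (0:ℝ) < b - a := sub_pos.2 hab
  have hcne : b - a ≠ 0 := ne_of_gt hc
  have hofne : ENNReal.ofReal (b - a) ≠ 0 := ne_of_gt (ENNReal.ofReal_pos.2 hc)
  have hinvne : (ENNReal.ofReal (b - a))⁻¹ ≠ 0 := by
    simp [ENNReal.inv_ne_zero]
  -- measurability of sections of SR
  have hSRx : ∀ x : ℝ, Measurable (fun ω => SR x ω) := fun x =>
    hSRmeas.comp (measurable_const.prodMk measurable_id)
  -- a.e. x ∈ Icc a b w.r.t. μ
  have hae_Icc : ∀ᵐ x ∂μ, x ∈ Set.Icc a b := by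
    rw [hμ]
    exact Measure.ae_smul_measure (ae_restrict_mem measurableSet_Icc) _
  -- the SR values are a.e. in {a, b}
  have hbad : ∀ x ∈ Set.Icc a b, ν {ω | SR x ω ≠ a ∧ SR x ω ≠ b} = 0 := by
    intro x hx
    obtain ⟨hb', ha'⟩ := hSR x hx
    have hSa : MeasurableSet {ω | SR x ω = a} := (hSRx x) (measurableSet_singleton a)
    have hSb : MeasurableSet {ω | SR x ω = b} := (hSRx x) (measurableSet_singleton b)
    have hdisj : Disjoint {ω | SR x ω = a} {ω | SR x ω = b} := by
      rw [Set.disjoint_left]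
      intro ω h1 h2
      exact absurd (h1.symm.trans h2) (ne_of_lt hab)
    have hnna : 0 ≤ (b - x) / (b - a) := div_nonneg (sub_nonneg.2 hx.2) hc.le
    have hnnb : 0 ≤ (x - a) / (b - a) := div_nonneg (sub_nonneg.2 hx.1) hc.le
    have hunion : ν ({ω | SR x ω = a} ∪ {ω | SR x ω = b}) = 1 := by
      rw [measure_union hdisj hSb, ha', hb', ← ENNReal.ofReal_add hnna hnnb]
      rw [← add_div]
      have : (b - x + (x - a)) / (b - a) = 1 := by field_simp; ring
      rw [this, ENNReal.ofReal_one]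
    have hcompl : ν ({ω | SR x ω = a} ∪ {ω | SR x ω = b})ᶜ = 0 := by
      have h := measure_compl (hSa.union hSb) (measure_ne_top ν _)
      rw [hunion, measure_univ, tsub_self] at h
      exact h
    refine measure_mono_null ?_ hcompl
    intro ω hω
    simp only [Set.mem_compl_iff, Set.mem_union, Set.mem_setOf_eq] at *
    tauto
  -- inner expectation for SR
  have hinner : ∀ x ∈ Set.Icc a b, ∫ ω, (SR x ω - x) ^ 2 ∂ν = (x - a) * (b - x) := by
    intro x hx
    obtain ⟨hb', ha'⟩ := hSR x hx
    have hSa : MeasurableSet {ω | SR x ω = a} := (hSRx x) (measurableSet_singleton a)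
    have hSb : MeasurableSet {ω | SR x ω = b} := (hSRx x) (measurableSet_singleton b)
    have hdisj : ∀ ω, ω ∈ {ω | SR x ω = a} → ω ∉ {ω | SR x ω = b} := by
      intro ω h1 h2
      exact absurd ((Set.mem_setOf_eq ▸ h1).symm.trans h2) (ne_of_lt hab)
    have hae : ∀ᵐ ω ∂ν, (SR x ω - x) ^ 2 =
        ({ω | SR x ω = b}.indicator (fun _ => (b - x) ^ 2) ω
          + {ω | SR x ω = a}.indicator (fun _ => (a - x) ^ 2) ω) := by
      rw [ae_iff]
      refine measure_mono_null ?_ (hbad x hx)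
      intro ω hω
      simp only [Set.mem_setOf_eq] at hω ⊢
      refine ⟨fun he => hω ?_, fun he => hω ?_⟩
      · rw [Set.indicator_of_notMem
          (by simp only [Set.mem_setOf_eq]; rw [he]; exact ne_of_lt hab),
          Set.indicator_of_mem (by exact he), he, zero_add]
      · rw [Set.indicator_of_mem (by exact he), Set.indicator_of_notMem
          (by simp only [Set.mem_setOf_eq]; rw [he]; exact (ne_of_lt hab).symm),
          he, add_zero]
    rw [integral_congr_ae hae, integral_add
      ((integrable_const _).indicator hSb) ((integrable_const _).indicator hSa),
      integral_indicator_const _ hSb, integral_indicator_const _ hSa, measureReal_def, measureReal_def, hb', ha',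
      ENNReal.toReal_ofReal (div_nonneg (sub_nonneg.2 hx.1) hc.le),
      ENNReal.toReal_ofReal (div_nonneg (sub_nonneg.2 hx.2) hc.le)]
    simp only [smul_eq_mul]
    field_simp
    ring
  -- μ is a probability measure
  have hμuniv : μ Set.univ = 1 := by
    rw [hμ]
    simp only [Measure.smul_apply, Measure.restrict_apply MeasurableSet.univ,
      Set.univ_inter, Real.volume_Icc, smul_eq_mul]
    exact ENNReal.inv_mul_cancel hofne ENNReal.ofReal_ne_top
  haveI hμprob : IsProbabilityMeasure μ := ⟨hμuniv⟩
  -- Integrability on the product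
  have hfm : Measurable (fun p : ℝ × Ω => (SR p.1 p.2 - p.1) ^ 2) :=
    (hSRmeas.sub measurable_fst).pow_const 2
  have hfst : ∀ᵐ p ∂(μ.prod ν), p.1 ∈ Set.Icc a b := by
    rw [ae_iff]
    have : {p : ℝ × Ω | ¬ p.1 ∈ Set.Icc a b} = (Set.Icc a b)ᶜ ×ˢ Set.univ := by
      ext p; simp
    rw [this, Measure.prod_prod]
    have : μ (Set.Icc a b)ᶜ = 0 := by
      rw [hμ]
      simp [Measure.restrict_apply (measurableSet_Icc.compl)]
    rw [this, zero_mul]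
  have hgood : ∀ᵐ p ∂(μ.prod ν), p.1 ∈ Set.Icc a b →
      (SR p.1 p.2 = a ∨ SR p.1 p.2 = b) := by
    rw [ae_iff]
    have hms : MeasurableSet {p : ℝ × Ω | p.1 ∈ Set.Icc a b ∧
        SR p.1 p.2 ≠ a ∧ SR p.1 p.2 ≠ b} := by
      refine (measurable_fst measurableSet_Icc).inter ?_
      exact ((hSRmeas (measurableSet_singleton a)).compl).inter
        ((hSRmeas (measurableSet_singleton b)).compl)
    have heq : {p : ℝ × Ω | ¬ (p.1 ∈ Set.Icc a b →
        (SR p.1 p.2 = a ∨ SR p.1 p.2 = b))} = {p : ℝ × Ω | p.1 ∈ Set.Icc a b ∧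
        SR p.1 p.2 ≠ a ∧ SR p.1 p.2 ≠ b} := by
      ext p; simp; tauto
    rw [heq, (Measure.measure_prod_null hms)]
    filter_upwards [hae_Icc] with x hx
    have : (Prod.mk x ⁻¹' {p : ℝ × Ω | p.1 ∈ Set.Icc a b ∧
        SR p.1 p.2 ≠ a ∧ SR p.1 p.2 ≠ b}) ⊆ {ω | SR x ω ≠ a ∧ SR x ω ≠ b} := by
      intro ω hω; exact hω.2
    exact measure_mono_null this (hbad x hx)
  have hint : Integrable (fun p : ℝ × Ω => (SR p.1 p.2 - p.1) ^ 2) (μ.prod ν) := by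
    refine Integrable.mono' (integrable_const ((b - a) ^ 2)) hfm.aestronglyMeasurable ?_
    filter_upwards [hfst, hgood] with p hp hg
    rcases hg hp with h | h <;>
    · rw [Real.norm_eq_abs, abs_of_nonneg (sq_nonneg _), h]
      have h1 := hp.1; have h2 := hp.2
      nlinarith
  -- RTN pointwise formula
  have hRTNmin : ∀ x ∈ Set.Icc a b,
      (RTN x - x) ^ 2 = min ((x - a) ^ 2) ((b - x) ^ 2) := by
    intro x hx
    obtain ⟨hor, h1, h2⟩ := hRTN x hx
    have e1 : |a - x| = x - a := by rw [abs_sub_comm]; exact abs_of_nonneg (sub_nonneg.2 hx.1)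
    have e2 : |b - x| = b - x := abs_of_nonneg (sub_nonneg.2 hx.2)
    have q1 : (RTN x - x) ^ 2 ≤ (x - a) ^ 2 := by
      rw [← sq_abs (RTN x - x), ← e1 ]
      exact pow_le_pow_left₀ (abs_nonneg _) h1 2
    have q2 : (RTN x - x) ^ 2 ≤ (b - x) ^ 2 := by
      rw [← sq_abs (RTN x - x), ← e2]
      exact pow_le_pow_left₀ (abs_nonneg _) h2 2
    refine le_antisymm (le_min q1 q2) ?_
    rcases hor with h | h
    · rw [h]
      have : (a - x) ^ 2 = (x - a) ^ 2 := by ring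
      rw [this]; exact min_le_left _ _
    · rw [h]; exact min_le_right _ _
  -- midpoint
  set m : ℝ := (a + b) / 2 with hm
  have ham : a ≤ m := by rw [hm]; linarith
  have hmb : m ≤ b := by rw [hm]; linarith
  -- interval integral computations
  have hI1 : ∫ x in a..m, (x - a) ^ 2 = (b - a) ^ 3 / 24 := by
    rw [intervalIntegral.integral_comp_sub_right (fun x => x ^ 2) a, integral_pow]
    rw [hm]; push_cast; ring
  have hI2 : ∫ x in m..b, (b - x) ^ 2 = (b - a) ^ 3 / 24 := by
    rw [intervalIntegral.integral_comp_sub_left (fun x => x ^ 2) b, integral_pow]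
    rw [hm]; push_cast; ring
  have hmincont : Continuous (fun x : ℝ => min ((x - a) ^ 2) ((b - x) ^ 2)) :=
    Continuous.min (by fun_prop) (by fun_prop)
  have hImin : ∫ x in a..b, min ((x - a) ^ 2) ((b - x) ^ 2) = (b - a) ^ 3 / 12 := by
    have hsplit := intervalIntegral.integral_add_adjacent_intervals
      (f := fun x : ℝ => min ((x - a) ^ 2) ((b - x) ^ 2)) (μ := volume) (a := a) (b := m) (c := b)
      (hmincont.intervalIntegrable _ _) (hmincont.intervalIntegrable _ _)
    rw [← hsplit]
    have e1 : ∫ x in a..m, min ((x - a) ^ 2) ((b - x) ^ 2) = ∫ x in a..m, (x - a) ^ 2 := by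
      apply intervalIntegral.integral_congr
      intro x hx
      rw [Set.uIcc_of_le ham] at hx
      apply min_eq_left
      have hxa : 0 ≤ x - a := sub_nonneg.2 hx.1
      have hxm : x ≤ m := hx.2
      have : x - a ≤ b - x := by rw [hm] at hxm; linarith
      nlinarith
    have e2 : ∫ x in m..b, min ((x - a) ^ 2) ((b - x) ^ 2) = ∫ x in m..b, (b - x) ^ 2 := by
      apply intervalIntegral.integral_congr
      intro x hx
      rw [Set.uIcc_of_le hmb] at hx
      apply min_eq_right
      have hxb : 0 ≤ b - x := sub_nonneg.2 hx.2
      have hxm : m ≤ x := hx.1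
      have : b - x ≤ x - a := by rw [hm] at hxm; linarith
      nlinarith
    rw [e1, e2, hI1, hI2]; ring
  -- integral over μ of a function, reduced to interval integral
  have hred : ∀ f : ℝ → ℝ, ∫ x, f x ∂μ = (b - a)⁻¹ * ∫ x in a..b, f x := by
    intro f
    rw [hμ, integral_smul_measure, ENNReal.toReal_inv, ENNReal.toReal_ofReal hc.le,
      smul_eq_mul]
    congr 1
    rw [integral_Icc_eq_integral_Ioc, ← intervalIntegral.integral_of_le hab.le]
  -- RTN integral
  have hRTNint : ∫ x, (RTN x - x) ^ 2 ∂μ = (b - a) ^ 2 / 12 := by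
    have hcong : ∫ x, (RTN x - x) ^ 2 ∂μ = ∫ x, min ((x - a) ^ 2) ((b - x) ^ 2) ∂μ := by
      apply integral_congr_ae
      filter_upwards [hae_Icc] with x hx
      exact hRTNmin x hx
    rw [hcong, hred, hImin]
    field_simp
  -- SR integral
  have hSRint : ∫ p, (SR p.1 p.2 - p.1) ^ 2 ∂(μ.prod ν) = (b - a) ^ 2 / 6 := by
    rw [integral_prod _ hint]
    have hcong : ∫ x, (∫ ω, (SR x ω - x) ^ 2 ∂ν) ∂μ = ∫ x, (x - a) * (b - x) ∂μ := by
      apply integral_congr_ae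
      filter_upwards [hae_Icc] with x hx
      exact hinner x hx
    rw [hcong, hred]
    have : ∫ x in a..b, (x - a) * (b - x) = (b - a) ^ 3 / 6 := by
      have e : ∫ x in a..b, (x - a) * (b - x) =
          ∫ x in a..b, ((a + b) * x - x ^ 2 - a * b) := by
        apply intervalIntegral.integral_congr
        intro x _
        ring
      rw [e, intervalIntegral.integral_sub, intervalIntegral.integral_sub,
        intervalIntegral.integral_const_mul, integral_id,
        integral_pow, intervalIntegral.integral_const]
      · simp only [smul_eq_mul]; push_cast; ring
      · exact (Continuous.intervalIntegrable (by fun_prop) _ _)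
      · exact (Continuous.intervalIntegrable (by fun_prop) _ _)
      · exact (Continuous.intervalIntegrable (by fun_prop) _ _)
      · exact (Continuous.intervalIntegrable (by fun_prop) _ _)
    rw [this]
    field_simp
  refine ⟨hRTNint, hSRint, ?_⟩
  rw [hRTNint, hSRint]
  ring
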